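/- arXiv:1707.08026 — 2 statements merged into one kernel-verified Lean document; each statement's English description precedes it below -/
import Mathlib

section
/- Let G be a graph, let P be a set of vertices of G, let x1, x2, v be distinct vertices in P, and let S be a squeeze by v. If G − S has a path between x1 and x2 whose vertex set is exactly P, then G has a path between x1 and x2 whose vertex set is exactly P ∪ S. -/
open SimpleGraph

/-- `t < toughness of G`: for every vertex cut `X` (a set whose removal leaves
more than one connected component), `t * (number of components of G - X) < |X|`. -/
def SimpleGraph.ToughnessGT {V : Type*} [Fintype V] (G : SimpleGraph V) (t : ℝ) : Prop :=
  ∀ X : Set V, 1 < Nat.card (G.induce Xᶜ).ConnectedComponent →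
    t * Nat.card (G.induce Xᶜ).ConnectedComponent < X.ncard

/-- `G` is `t`-tough: for every vertex cut `X`, `t * (number of components) ≤ |X|`. -/
def SimpleGraph.ToughGE {V : Type*} [Fintype V] (G : SimpleGraph V) (t : ℝ) : Prop :=
  ∀ X : Set V, 1 < Nat.card (G.induce Xᶜ).ConnectedComponent →
    t * Nat.card (G.induce Xᶜ).ConnectedComponent ≤ X.ncard

/-- `G` is a `k`-tree: it can be built from `K_k` by repeatedly adding a vertex
whose neighbourhood among the previously added vertices is a `k`-clique. -/
def SimpleGraph.IsKTree {V : Type*} [Fintype V] (k : ℕ) (G : SimpleGraph V) : Prop :=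
  k ≤ Fintype.card V ∧
    ∃ e : V ≃ Fin (Fintype.card V),
      ∀ v : V, G.IsClique {w : V | G.Adj v w ∧ e w < e v} ∧
        Set.ncard {w : V | G.Adj v w ∧ e w < e v} = min (e v : ℕ) k

/-- The bud of a vertex `v` in a `k`-tree: its neighbours of degree `k`. -/
def SimpleGraph.bud {V : Type*} (G : SimpleGraph V) (k : ℕ) (v : V) : Set V :=
  {w : V | G.Adj v w ∧ (G.neighborSet w).ncard = k}

/-- `v` is a twig of the `k`-tree `G`: `v` is not universal, the set `S` of its
neighbours of degree `k` is nonempty, and `N(v) \ S` induces `K_k`. -/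
def SimpleGraph.IsTwig {V : Type*} (G : SimpleGraph V) (k : ℕ) (v : V) : Prop :=
  (∃ w, w ≠ v ∧ ¬ G.Adj v w) ∧ (G.bud k v).Nonempty ∧
    G.IsClique (G.neighborSet v \ G.bud k v) ∧ (G.neighborSet v \ G.bud k v).ncard = k

/-- `S` is a squeeze by `v`. -/
def SimpleGraph.IsSqueeze {V : Type*} (G : SimpleGraph V) (v : V) (S : Set V) : Prop :=
  S ⊆ G.neighborSet v ∧ 1 ≤ S.ncard ∧ S.ncard ≤ 2 ∧
    2 ≤ (G.neighborSet v \ S).ncard ∧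
    (∀ s ∈ S, (G.neighborSet v \ S).ncard - 1 ≤ ((G.neighborSet v \ S) ∩ G.neighborSet s).ncard) ∧
    (∀ r ∈ G.neighborSet v \ S, S.ncard - 1 ≤ (S ∩ G.neighborSet r).ncard)

/-- A chordal graph: every cycle of length at least 4 has a chord, i.e. an edge of `G`
between two vertices of the cycle that is not an edge of the cycle. -/
def SimpleGraph.IsChordal {V : Type*} (G : SimpleGraph V) : Prop :=
  ∀ (v : V) (c : G.Walk v v), c.IsCycle → 4 ≤ c.length →
    ∃ x y, x ∈ c.support ∧ y ∈ c.support ∧ G.Adj x y ∧ s(x, y) ∉ c.edges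

/-- `H` is a minor of `G`, witnessed by branch sets. -/
def SimpleGraph.HasMinor {V W : Type*} (G : SimpleGraph V) (H : SimpleGraph W) : Prop :=
  ∃ f : W → Set V, (∀ w, (f w).Nonempty) ∧ (∀ w, (G.induce (f w)).Connected) ∧
    (Pairwise (Function.onFun Disjoint f)) ∧
    ∀ w₁ w₂, H.Adj w₁ w₂ → ∃ a ∈ f w₁, ∃ b ∈ f w₂, G.Adj a b

/-- Planarity, via Wagner's theorem: no `K₅` or `K_{3,3}` minor. -/
def SimpleGraph.IsPlanar {V : Type*} (G : SimpleGraph V) : Prop :=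
  ¬ G.HasMinor (completeGraph (Fin 5)) ∧ ¬ G.HasMinor (completeBipartiteGraph (Fin 3) (Fin 3))

/-- `G` is `k`-connected. -/
def SimpleGraph.IsKConnected {V : Type*} [Fintype V] (k : ℕ) (G : SimpleGraph V) : Prop :=
  k + 1 ≤ Fintype.card V ∧ ∀ X : Set V, X.ncard < k → (G.induce Xᶜ).Connected

/-- The square of a graph: two vertices are adjacent iff their distance is 1 or 2. -/
def SimpleGraph.square {V : Type*} (G : SimpleGraph V) : SimpleGraph V where
  Adj v w := v ≠ w ∧ (G.Adj v w ∨ ∃ u, G.Adj v u ∧ G.Adj u w)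
  symm := ⟨by
    rintro v w ⟨hne, h | ⟨u, h1, h2⟩⟩
    · exact ⟨hne.symm, Or.inl h.symm⟩
    · exact ⟨hne.symm, Or.inr ⟨u, h2.symm, h1.symm⟩⟩⟩
  loopless := ⟨by rintro v ⟨hne, -⟩; exact hne rfl⟩

/-- `G` is Hamilton-connected. -/
def SimpleGraph.IsHamiltonConnected {V : Type*} (G : SimpleGraph V) : Prop :=
  ∀ x y : V, x ≠ y → ∃ p : G.Walk x y, p.IsPath ∧ ∀ w, w ∈ p.support


theorem squeeze_path_extension {V : Type*} (G : SimpleGraph V) (P : Set V)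
    (x1 x2 v : V) (hx1 : x1 ∈ P) (hx2 : x2 ∈ P) (hv : v ∈ P)
    (h12 : x1 ≠ x2) (h1v : x1 ≠ v) (h2v : x2 ≠ v)
    (S : Set V) (hS : G.IsSqueeze v S)
    (hpath : ∃ p : G.Walk x1 x2, p.IsPath ∧ (∀ w ∈ p.support, w ∉ S) ∧
      {w : V | w ∈ p.support} = P) :
    ∃ q : G.Walk x1 x2, q.IsPath ∧ {w : V | w ∈ q.support} = P ∪ S := by
  classical
  obtain ⟨p, hp, hdisjS, hsupp⟩ := hpath
  obtain ⟨hSsub, hS1, hS2, hR2, hSadj, hRadj⟩ := hS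
  have hvp : v ∈ p.support := by rw [← hsupp] at hv; exact hv
  set p₁ := p.takeUntil v hvp with hp₁def
  set p₂ := p.dropUntil v hvp with hp₂def
  have hsplit : p₁.append p₂ = p := p.take_spec hvp
  obtain ⟨b, hvb, p₂', hp₂⟩ := Walk.exists_eq_cons_of_ne h2v.symm p₂
  obtain ⟨a, hva, r₁, hr₁⟩ := Walk.exists_eq_cons_of_ne h1v.symm p₁.reverse
  have hp₁ : p₁ = (Walk.cons hva r₁).reverse := by rw [← hr₁, Walk.reverse_reverse]
  have hP : p.support = r₁.support.reverse ++ (v :: p₂'.support) := by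
    rw [← hsplit, hp₁, hp₂, Walk.support_append, Walk.support_reverse,
      Walk.support_cons, Walk.support_cons]
    simp
  have hnd : (r₁.support.reverse ++ (v :: p₂'.support)).Nodup := by
    rw [← hP]; exact hp.support_nodup
  have haL1 : a ∈ r₁.support.reverse := by
    rw [List.mem_reverse]; exact r₁.start_mem_support
  have hbL2 : b ∈ p₂'.support := p₂'.start_mem_support
  have hmemp : ∀ x, x ∈ p.support ↔ (x ∈ r₁.support.reverse ∨ x = v ∨ x ∈ p₂'.support) := by
    intro x; rw [hP]; simp
  have haS : a ∉ S := hdisjS a ((hmemp a).2 (Or.inl haL1))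
  have hbS : b ∉ S := hdisjS b ((hmemp b).2 (Or.inr (Or.inr hbL2)))
  have hL1 : r₁.support.reverse.Nodup := (List.nodup_append'.mp hnd).1
  have hndR : (v :: p₂'.support).Nodup := (List.nodup_append'.mp hnd).2.1
  have hL2 : p₂'.support.Nodup := (List.nodup_cons.mp hndR).2
  have hvL2 : v ∉ p₂'.support := (List.nodup_cons.mp hndR).1
  have hdisj12 := List.disjoint_of_nodup_append hnd
  have hvL1 : v ∉ r₁.support.reverse := fun h => hdisj12 h List.mem_cons_self
  have hab : a ≠ b := by
    intro h; subst h; exact hdisj12 haL1 (List.mem_cons_of_mem _ hbL2)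
  have haR : a ∈ G.neighborSet v \ S := ⟨hva, haS⟩
  have hbR : b ∈ G.neighborSet v \ S := ⟨hvb, hbS⟩
  have hRfin : (G.neighborSet v \ S).Finite := Set.finite_of_ncard_ne_zero (by omega)
  -- main construction lemma
  have main : ∀ (M : List V) (w : G.Walk a x2), w.support = a :: (M ++ p₂'.support) →
      M.Nodup → (∀ x, x ∈ M ↔ x = v ∨ x ∈ S) →
      ∃ q : G.Walk x1 x2, q.IsPath ∧ {w : V | w ∈ q.support} = P ∪ S := by
    intro M w hw hM hMmem
    refine ⟨r₁.reverse.append w, ?_, ?_⟩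
    · rw [Walk.isPath_def, Walk.support_append, hw, Walk.support_reverse]
      simp only [List.tail_cons]
      rw [List.nodup_append']
      refine ⟨hL1, ?_, ?_⟩
      · rw [List.nodup_append']
        refine ⟨hM, hL2, ?_⟩
        intro x hxM hxL2
        rcases (hMmem x).1 hxM with rfl | hxS
        · exact hvL2 hxL2
        · exact hdisjS x ((hmemp x).2 (Or.inr (Or.inr hxL2))) hxS
      · intro x hxL1 hxM
        have hxnotL2 : x ∉ p₂'.support := fun h => hdisj12 hxL1 (List.mem_cons_of_mem v h)
        have hxM' : x ∈ M := (List.mem_append.mp hxM).resolve_right hxnotL2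
        rcases (hMmem x).1 hxM' with rfl | hxS
        · exact hvL1 hxL1
        · exact hdisjS x ((hmemp x).2 (Or.inl hxL1)) hxS
    · ext x
      rw [Set.mem_union, ← hsupp]
      simp only [Set.mem_setOf_eq, Walk.support_append, hw, Walk.support_reverse,
        List.tail_cons, List.mem_append, hmemp x]
      have hax : a ∈ p.support := (hmemp a).2 (Or.inl haL1)
      have h := hMmem x
      constructor
      · rintro (h1 | h1 | h1)
        · exact Or.inl (Or.inl h1)
        · rcases h.1 h1 with rfl | hxS
          · exact Or.inl (Or.inr (Or.inl rfl))
          · exact Or.inr hxS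
        · exact Or.inl (Or.inr (Or.inr h1))
      · rintro ((h1 | h1 | h1) | h1)
        · exact Or.inl h1
        · exact Or.inr (Or.inl (h.2 (Or.inl h1)))
        · exact Or.inr (Or.inr h1)
        · exact Or.inr (Or.inl (h.2 (Or.inr h1)))
  -- every vertex of S is adjacent to a or b
  have key : ∀ s ∈ S, G.Adj s a ∨ G.Adj s b := by
    intro s hs
    by_contra hcon
    push_neg at hcon
    have hsub : (G.neighborSet v \ S) ∩ G.neighborSet s ⊆ (G.neighborSet v \ S) \ {a, b} := by
      rintro x ⟨hx1, hx2⟩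
      refine ⟨hx1, ?_⟩
      intro hx
      rcases hx with rfl | rfl
      · exact hcon.1 hx2
      · exact hcon.2 hx2
    have h1 := hSadj s hs
    have h2 := Set.ncard_le_ncard hsub hRfin.diff
    have hABsub : ({a, b} : Set V) ⊆ G.neighborSet v \ S := by
      rintro x (rfl | rfl); exacts [haR, hbR]
    have h3 : ((G.neighborSet v \ S) \ {a, b}).ncard = (G.neighborSet v \ S).ncard - 2 := by
      rw [Set.ncard_diff hABsub, Set.ncard_pair hab]
    omega
  rcases (by omega : S.ncard = 1 ∨ S.ncard = 2) with h1 | h2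
  · -- |S| = 1
    obtain ⟨s, rfl⟩ := Set.ncard_eq_one.mp h1
    have hsS : s ∈ ({s} : Set V) := rfl
    have hsv : G.Adj v s := hSsub hsS
    rcases key s hsS with hsa | hsb
    · refine main [s, v] (Walk.cons hsa.symm (Walk.cons hsv.symm (Walk.cons hvb p₂'))) rfl ?_ ?_
      · simp [hsv.ne']
      · intro x; simp [or_comm]
    · refine main [v, s] (Walk.cons hva.symm (Walk.cons hsv (Walk.cons hsb p₂'))) rfl ?_ ?_
      · simp [hsv.ne, hsv.ne']
      · intro x; simp
  · -- |S| = 2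
    obtain ⟨s, t, hst, hSeq⟩ := Set.ncard_eq_two.mp h2
    have hane : (S ∩ G.neighborSet a).Nonempty := by
      have := hRadj a haR; exact Set.nonempty_of_ncard_ne_zero (by omega)
    have hbne : (S ∩ G.neighborSet b).Nonempty := by
      have := hRadj b hbR; exact Set.nonempty_of_ncard_ne_zero (by omega)
    obtain ⟨sa, hsaS, hsaa⟩ := hane
    obtain ⟨sb, hsbS, hsbb⟩ := hbne
    have pair : ∃ u w', u ≠ w' ∧ S = {u, w'} ∧ G.Adj u a ∧ G.Adj w' b := by
      rcases eq_or_ne sa sb with rfl | hne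
      · have hother : ∃ o, o ∈ S ∧ o ≠ sa ∧ S = {sa, o} := by
          rw [hSeq] at hsaS ⊢
          rcases hsaS with rfl | rfl
          · exact ⟨t, Or.inr rfl, hst.symm, rfl⟩
          · exact ⟨s, Or.inl rfl, hst, Set.pair_comm _ _⟩
        obtain ⟨o, hoS, honesa, hSo⟩ := hother
        rcases key o hoS with hoa | hob
        · exact ⟨o, sa, honesa, by rw [hSo, Set.pair_comm], hoa, hsbb.symm⟩
        · exact ⟨sa, o, honesa.symm, hSo, hsaa.symm, hob⟩
      · refine ⟨sa, sb, hne, ?_, hsaa.symm, hsbb.symm⟩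
        rw [hSeq] at hsaS hsbS ⊢
        rcases hsaS with rfl | rfl <;> rcases hsbS with rfl | rfl
        · exact absurd rfl hne
        · rfl
        · exact Set.pair_comm _ _
        · exact absurd rfl hne
    obtain ⟨u, w', huw, hSuw, hua, hwb⟩ := pair
    have huS : u ∈ S := by rw [hSuw]; exact Or.inl rfl
    have hwS : w' ∈ S := by rw [hSuw]; exact Or.inr rfl
    have huv : G.Adj v u := hSsub huS
    have hwv : G.Adj v w' := hSsub hwS
    refine main [u, v, w']
      (Walk.cons hua.symm (Walk.cons huv.symm (Walk.cons hwv (Walk.cons hwb p₂')))) rfl ?_ ?_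
    · simp [huv.ne', hwv.ne, hwv.ne', huw]
    · intro x; rw [hSuw]; simp; tauto
end

section
/- Let T be a tree. The square T² is planar if and only if T has no vertex of degree greater than 3. -/
open SimpleGraph

open SimpleGraph Walk

namespace TreeSqAux

variable {V : Type*} {T : SimpleGraph V}

noncomputable def geo (hT : T.IsTree) (x y : V) : T.Walk x y :=
  (hT.existsUnique_path x y).exists.choose

lemma geo_isPath (hT : T.IsTree) (x y : V) : (geo hT x y).IsPath :=
  (hT.existsUnique_path x y).exists.choose_spec

lemma path_eq_geo (hT : T.IsTree) {x y : V} (p : T.Walk x y) (hp : p.IsPath) :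
    p = geo hT x y :=
  (hT.existsUnique_path x y).unique hp (geo_isPath hT x y)

lemma geo_support_subset (hT : T.IsTree) {x y : V} (w : T.Walk x y) :
    (geo hT x y).support ⊆ w.support := by
  classical
  rw [← path_eq_geo hT w.bypass w.bypass_isPath]
  exact w.support_bypass_subset

lemma geo_self (hT : T.IsTree) (x : V) : geo hT x x = Walk.nil :=
  (path_eq_geo hT Walk.nil IsPath.nil).symm

/-- convexity wrt tree geodesics -/
def Cvx (hT : T.IsTree) (S : Set V) : Prop :=
  ∀ ⦃x⦄, x ∈ S → ∀ ⦃y⦄, y ∈ S → ∀ ⦃v⦄, v ∈ (geo hT x y).support → v ∈ S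

lemma cvx_of_walks (hT : T.IsTree) {S : Set V}
    (h : ∀ x ∈ S, ∀ y ∈ S, ∃ w : T.Walk x y, ∀ v ∈ w.support, v ∈ S) :
    Cvx hT S := by
  intro x hx y hy v hv
  obtain ⟨w, hw⟩ := h x hx y hy
  exact hw v (geo_support_subset hT w hv)

lemma cvx_inter (hT : T.IsTree) {S₁ S₂ : Set V} (h1 : Cvx hT S₁) (h2 : Cvx hT S₂) :
    Cvx hT (S₁ ∩ S₂) :=
  fun _ hx _ hy _ hv => ⟨h1 hx.1 hy.1 hv, h2 hx.2 hy.2 hv⟩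

lemma median (hT : T.IsTree) (x y z : V) :
    ∃ m, m ∈ (geo hT x y).support ∧ m ∈ (geo hT x z).support ∧ m ∈ (geo hT y z).support := by
  classical
  generalize hn : (geo hT x y).length = n
  induction n using Nat.strong_induction_on generalizing x with
  | _ n ih =>
    by_cases hx : x ∈ (geo hT y z).support
    · exact ⟨x, Walk.start_mem_support _, Walk.start_mem_support _, hx⟩
    have hxy : x ≠ y := by rintro rfl; exact hx (Walk.start_mem_support _)
    obtain ⟨a, ha, P₁, hP⟩ := Walk.exists_eq_cons_of_ne hxy (geo hT x y)
    have hgp := geo_isPath hT x y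
    rw [hP] at hgp
    rw [Walk.cons_isPath_iff] at hgp
    have hP₁geo : P₁ = geo hT a y := path_eq_geo hT P₁ hgp.1
    set W' := (P₁.append (geo hT y z)).bypass with hW'
    have hW'path : W'.IsPath := Walk.bypass_isPath _
    have hxW' : x ∉ W'.support := by
      intro hmem
      have := Walk.support_bypass_subset _ hmem
      rw [Walk.mem_support_append_iff] at this
      rcases this with h' | h'
      · exact hgp.2 h'
      · exact hx h'
    have hcons : (Walk.cons ha W').IsPath := by
      rw [Walk.cons_isPath_iff]; exact ⟨hW'path, hxW'⟩
    have hgxz : geo hT x z = Walk.cons ha W' := (path_eq_geo hT _ hcons).symm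
    have hW'geo : W' = geo hT a z := path_eq_geo hT W' hW'path
    obtain ⟨m, hm1, hm2, hm3⟩ := ih P₁.length (by rw [hP, Walk.length_cons] at hn; omega) a (by rw [← hP₁geo])
    refine ⟨m, ?_, ?_, hm3⟩
    · rw [hP, Walk.support_cons]
      exact List.mem_cons_of_mem _ (by rwa [hP₁geo])
    · rw [hgxz, Walk.support_cons]
      exact List.mem_cons_of_mem _ (by rwa [hW'geo])

lemma helly3 (hT : T.IsTree) {S₁ S₂ S₃ : Set V} (h1 : Cvx hT S₁) (h2 : Cvx hT S₂)
    (h3 : Cvx hT S₃) (h12 : (S₁ ∩ S₂).Nonempty) (h13 : (S₁ ∩ S₃).Nonempty)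
    (h23 : (S₂ ∩ S₃).Nonempty) : ((S₁ ∩ S₂) ∩ S₃).Nonempty := by
  obtain ⟨x, hx⟩ := h12
  obtain ⟨y, hy⟩ := h13
  obtain ⟨z, hz⟩ := h23
  obtain ⟨m, hm1, hm2, hm3⟩ := median hT x y z
  exact ⟨m, ⟨h1 hx.1 hy.1 hm1, h2 hx.2 hz.1 hm2⟩, h3 hy.2 hz.2 hm3⟩



lemma hellyList (hT : T.IsTree) (L : List (Set V)) (hc : ∀ S ∈ L, Cvx hT S)
    (hp : ∀ S ∈ L, ∀ S' ∈ L, (S ∩ S').Nonempty) : ∃ m, ∀ S ∈ L, m ∈ S := by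
  have hne : Nonempty V := hT.1.nonempty
  suffices h : ∀ (n : ℕ) (L : List (Set V)), (∀ S ∈ L, Cvx hT S) →
      (∀ S ∈ L, ∀ S' ∈ L, (S ∩ S').Nonempty) → L.length = n → ∃ m, ∀ S ∈ L, m ∈ S from
    h L.length L hc hp rfl
  intro n
  induction n using Nat.strong_induction_on with
  | _ n ih =>
    intro L hc hp hL
    match L with
    | [] => exact ⟨Classical.arbitrary V, by simp⟩
    | [S] =>
      obtain ⟨m, hm⟩ := hp S (by simp) S (by simp)
      exact ⟨m, by simpa using hm.1⟩
    | S :: S' :: L' =>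
      have hSS' : (S ∩ S').Nonempty := hp S (by simp) S' (by simp)
      obtain ⟨m, hm⟩ := ih (L'.length + 1) (by simp at hL; omega) ((S ∩ S') :: L')
        (by
          intro S'' hS''
          rcases List.mem_cons.mp hS'' with rfl | h
          · exact cvx_inter hT (hc S (by simp)) (hc S' (by simp))
          · exact hc S'' (by simp [h]))
        (by
          intro S₁ hS₁ S₂ hS₂
          rcases List.mem_cons.mp hS₁ with rfl | h₁ <;> rcases List.mem_cons.mp hS₂ with rfl | h₂
          · exact hSS'.mono (Set.subset_inter Set.Subset.rfl Set.Subset.rfl)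
          · exact helly3 hT (hc S (by simp)) (hc S' (by simp)) (hc S₂ (by simp [h₂]))
              hSS' (hp S (by simp) S₂ (by simp [h₂])) (hp S' (by simp) S₂ (by simp [h₂]))
          · rw [Set.inter_comm]
            exact helly3 hT (hc S (by simp)) (hc S' (by simp)) (hc S₁ (by simp [h₁]))
              hSS' (hp S (by simp) S₁ (by simp [h₁])) (hp S' (by simp) S₁ (by simp [h₁]))
          · exact hp S₁ (by simp [h₁]) S₂ (by simp [h₂]))
        rfl
      refine ⟨m, ?_⟩
      intro S'' hS''
      rcases List.mem_cons.mp hS'' with rfl | h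
      · exact (hm _ List.mem_cons_self).1
      rcases List.mem_cons.mp h with rfl | h'
      · exact (hm _ List.mem_cons_self).2
      · exact hm S'' (by simp [h'])

/-- closed neighbourhood of a set -/
def nbhd (T : SimpleGraph V) (X : Set V) : Set V := {v | ∃ x ∈ X, v = x ∨ T.Adj x v}

lemma subset_nbhd {X : Set V} : X ⊆ nbhd T X := fun x hx => ⟨x, hx, Or.inl rfl⟩

lemma nbhd_nonempty {X : Set V} (h : X.Nonempty) : (nbhd T X).Nonempty :=
  h.mono subset_nbhd

/-- the inclusion homomorphism -/
def indHom (G : SimpleGraph V) (X : Set V) : G.induce X →g G where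
  toFun := Subtype.val
  map_rel' := fun h => h

lemma exists_squareWalk {X : Set V} (hX : (T.square.induce X).Connected)
    {x y : V} (hx : x ∈ X) (hy : y ∈ X) :
    ∃ w : T.square.Walk x y, ∀ v ∈ w.support, v ∈ X := by
  obtain ⟨w⟩ := hX.preconnected ⟨x, hx⟩ ⟨y, hy⟩
  refine ⟨w.map (indHom T.square X), ?_⟩
  intro v hv
  change v ∈ (w.map (indHom T.square X)).support at hv
  rw [Walk.support_map, List.mem_map] at hv
  obtain ⟨⟨u, hu⟩, _, rfl⟩ := hv
  exact hu

lemma squareWalk_to_walk {X : Set V} :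
    ∀ {a b : V} (w : T.square.Walk a b), (∀ v ∈ w.support, v ∈ X) →
      ∃ w' : T.Walk a b, ∀ v ∈ w'.support, v ∈ nbhd T X
  | _, _, Walk.nil, h => ⟨Walk.nil, by
      intro v hv; simp at hv; subst hv; exact subset_nbhd (h _ (Walk.start_mem_support _))⟩
  | a, b, Walk.cons h p, hsup => by
      have haX : a ∈ X := hsup a (Walk.start_mem_support _)
      have hp : ∀ v ∈ p.support, v ∈ X := fun v hv =>
        hsup v (by rw [Walk.support_cons]; exact List.mem_cons_of_mem _ hv)
      obtain ⟨w', hw'⟩ := squareWalk_to_walk p hp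
      rcases h.2 with hadj | ⟨u, h1, h2⟩
      · refine ⟨Walk.cons hadj w', ?_⟩
        intro v hv
        rw [Walk.support_cons] at hv
        rcases List.mem_cons.mp hv with rfl | hv
        · exact subset_nbhd haX
        · exact hw' v hv
      · refine ⟨Walk.cons h1 (Walk.cons h2 w'), ?_⟩
        intro v hv
        rw [Walk.support_cons] at hv
        rcases List.mem_cons.mp hv with rfl | hv
        · exact subset_nbhd haX
        rw [Walk.support_cons] at hv
        rcases List.mem_cons.mp hv with rfl | hv
        · exact ⟨a, haX, Or.inr h1⟩
        · exact hw' v hv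

lemma nbhd_cvx (hT : T.IsTree) {X : Set V} (hX : (T.square.induce X).Connected) :
    Cvx hT (nbhd T X) := by
  apply cvx_of_walks
  rintro u ⟨xu, hxu, hu⟩ v ⟨xv, hxv, hv⟩
  obtain ⟨ws, hws⟩ := exists_squareWalk hX hxu hxv
  obtain ⟨wm, hwm⟩ := squareWalk_to_walk ws hws
  have wu : ∃ w : T.Walk u xu, ∀ z ∈ w.support, z ∈ nbhd T X := by
    rcases hu with rfl | hadj
    · exact ⟨Walk.nil, by intro z hz; simp at hz; subst hz; exact subset_nbhd hxu⟩
    · refine ⟨Walk.cons hadj.symm Walk.nil, ?_⟩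
      intro z hz
      simp only [Walk.support_cons, Walk.support_nil] at hz
      rcases List.mem_cons.mp hz with rfl | hz
      · exact ⟨xu, hxu, Or.inr hadj⟩
      · simp at hz; subst hz; exact subset_nbhd hxu
  have wv : ∃ w : T.Walk xv v, ∀ z ∈ w.support, z ∈ nbhd T X := by
    rcases hv with rfl | hadj
    · exact ⟨Walk.nil, by intro z hz; simp at hz; subst hz; exact subset_nbhd hxv⟩
    · refine ⟨Walk.cons hadj Walk.nil, ?_⟩
      intro z hz
      simp only [Walk.support_cons, Walk.support_nil] at hz
      rcases List.mem_cons.mp hz with rfl | hz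
      · exact subset_nbhd hxv
      · simp at hz; subst hz; exact ⟨xv, hxv, Or.inr hadj⟩
  obtain ⟨w1, h1⟩ := wu
  obtain ⟨w2, h2⟩ := wv
  refine ⟨w1.append (wm.append w2), ?_⟩
  intro z hz
  rw [Walk.mem_support_append_iff] at hz
  rcases hz with hz | hz
  · exact h1 z hz
  rw [Walk.mem_support_append_iff] at hz
  rcases hz with hz | hz
  · exact hwm z hz
  · exact h2 z hz

lemma nbhd_cross {X Y : Set V} {a b : V} (ha : a ∈ X) (hb : b ∈ Y)
    (hab : T.square.Adj a b) : (nbhd T X ∩ nbhd T Y).Nonempty := by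
  rcases hab.2 with h | ⟨u, h1, h2⟩
  · exact ⟨a, subset_nbhd ha, ⟨b, hb, Or.inr h.symm⟩⟩
  · exact ⟨u, ⟨a, ha, Or.inr h1⟩, ⟨b, hb, Or.inr h2.symm⟩⟩

lemma exists_crossing {G : SimpleGraph V} (P : V → Prop) :
    ∀ {x y : V} (w : G.Walk x y), P x → ¬ P y →
      ∃ (a b : V) (h : G.Adj a b) (w1 : G.Walk x a) (w2 : G.Walk b y),
        P a ∧ ¬ P b ∧ w = w1.append (Walk.cons h w2) ∧ a ∈ w.support ∧ b ∈ w.support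
  | x, _, Walk.nil, hx, hy => absurd hx hy
  | x, y, Walk.cons (v := u) h p, hx, hy => by
      classical
      by_cases hu : P u
      · obtain ⟨a, b, hab, w1, w2, ha, hb, heq, ham, hbm⟩ := exists_crossing P p hu hy
        refine ⟨a, b, hab, Walk.cons h w1, w2, ha, hb, ?_, ?_, ?_⟩
        · rw [Walk.cons_append, heq]
        · rw [Walk.support_cons]; exact List.mem_cons_of_mem _ ham
        · rw [Walk.support_cons]; exact List.mem_cons_of_mem _ hbm
      · refine ⟨x, u, h, Walk.nil, p, hx, hu, ?_, Walk.start_mem_support _, ?_⟩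
        · rw [Walk.nil_append]
        · rw [Walk.support_cons]; exact List.mem_cons_of_mem _ (Walk.start_mem_support _)

lemma crossing_edge (hT : T.IsTree) {p q a b : V} (hpq : T.Adj p q) (hab : T.Adj a b)
    (ha : q ∉ (geo hT a p).support) (hb : q ∈ (geo hT b p).support) : a = p ∧ b = q := by
  classical
  -- step 1 : b ∉ support of geo a p
  have hb_not : b ∉ (geo hT a p).support := by
    intro hbmem
    have hdrop : ((geo hT a p).dropUntil b hbmem) = geo hT b p :=
      path_eq_geo hT _ ((geo_isPath hT a p).dropUntil hbmem)
    exact ha (Walk.support_dropUntil_subset _ hbmem (hdrop ▸ hb))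
  -- step 2 : a ∈ support of geo b p
  have ha_mem : a ∈ (geo hT b p).support := by
    by_contra hanotin
    have hcons : (Walk.cons hab (geo hT b p)).IsPath := by
      rw [Walk.cons_isPath_iff]; exact ⟨geo_isPath hT b p, hanotin⟩
    have : Walk.cons hab (geo hT b p) = geo hT a p := path_eq_geo hT _ hcons
    apply ha
    rw [← this, Walk.support_cons]
    exact List.mem_cons_of_mem _ hb
  -- step 3/4/5 : support (geo b p) = b :: support (geo a p)
  have htake : ((geo hT b p).takeUntil a ha_mem) = geo hT b a :=
    path_eq_geo hT _ ((geo_isPath hT b p).takeUntil ha_mem)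
  have hdrop : ((geo hT b p).dropUntil a ha_mem) = geo hT a p :=
    path_eq_geo hT _ ((geo_isPath hT b p).dropUntil ha_mem)
  have hba : geo hT b a = Walk.cons hab.symm Walk.nil := by
    refine (path_eq_geo hT _ ?_).symm
    rw [Walk.cons_isPath_iff]
    exact ⟨Walk.IsPath.nil, by simp [hab.ne']⟩
  have hsupp : (geo hT b p).support = b :: (geo hT a p).support := by
    conv_lhs => rw [← Walk.take_spec (geo hT b p) ha_mem]
    rw [Walk.support_append, htake, hdrop, hba]
    rw [Walk.support_cons, Walk.support_nil]
    rw [(geo hT a p).support_eq_cons]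
    rfl
  have hbq : b = q := by
    rw [hsupp] at hb
    rcases List.mem_cons.mp hb with h | h
    · exact h.symm
    · exact absurd h ha
  subst hbq
  refine ⟨?_, rfl⟩
  have hqp : geo hT b p = Walk.cons hpq.symm Walk.nil := by
    refine (path_eq_geo hT _ ?_).symm
    rw [Walk.cons_isPath_iff]
    exact ⟨Walk.IsPath.nil, by simp [hpq.ne']⟩
  rw [hqp] at ha_mem
  simp only [Walk.support_cons, Walk.support_nil] at ha_mem
  rcases List.mem_cons.mp ha_mem with h | h
  · exact absurd (h ▸ Walk.start_mem_support (geo hT a p)) ha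
  · simpa using h

lemma sep_contra (hT : T.IsTree) {X Y : Set V} {Z : Fin 3 → Set V}
    (hXc : (T.square.induce X).Connected) (hYc : (T.square.induce Y).Connected)
    (hZc : ∀ j, (T.square.induce (Z j)).Connected)
    (hXY : ¬ (nbhd T X ∩ nbhd T Y).Nonempty)
    (hZd : ∀ i j, i ≠ j → Disjoint (Z i) (Z j))
    (hZX : ∀ j, (nbhd T (Z j) ∩ nbhd T X).Nonempty)
    (hZY : ∀ j, (nbhd T (Z j) ∩ nbhd T Y).Nonempty) : False := by
  classical
  have cvX : Cvx hT (nbhd T X) := nbhd_cvx hT hXc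
  have cvY : Cvx hT (nbhd T Y) := nbhd_cvx hT hYc
  have cvZ : ∀ j, Cvx hT (nbhd T (Z j)) := fun j => nbhd_cvx hT (hZc j)
  obtain ⟨⟨x, hx⟩⟩ := hXc.nonempty
  obtain ⟨⟨y, hy⟩⟩ := hYc.nonempty
  have hxX : x ∈ nbhd T X := subset_nbhd hx
  have hyY : y ∈ nbhd T Y := subset_nbhd hy
  have hynX : y ∉ nbhd T X := fun h => hXY ⟨y, h, hyY⟩
  obtain ⟨p, q, hpq, w1, w2, hpX, hqX, hdec, -, -⟩ :=
    exists_crossing (· ∈ nbhd T X) (geo hT x y) hxX hynX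
  have hC1p : q ∉ (geo hT p p).support := by
    rw [geo_self, Walk.support_nil]
    exact fun h => hpq.ne' (List.mem_singleton.mp h)
  have hSX : ∀ v ∈ nbhd T X, q ∉ (geo hT v p).support := by
    intro v hv hvc
    exact hqX (cvX hv hpX hvc)
  have hpypath : (Walk.cons hpq w2).IsPath := by
    have h := geo_isPath hT x y
    rw [hdec] at h
    exact h.of_append_right
  have hpy : Walk.cons hpq w2 = geo hT p y := path_eq_geo hT _ hpypath
  have hqpy : q ∈ (geo hT p y).support := by
    rw [← hpy, Walk.support_cons]
    exact List.mem_cons_of_mem _ (Walk.start_mem_support _)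
  have hyp : q ∈ (geo hT y p).support := by
    have hrev : (geo hT p y).reverse = geo hT y p :=
      path_eq_geo hT _ ((geo_isPath hT p y).reverse)
    rw [← hrev, Walk.support_reverse, List.mem_reverse]
    exact hqpy
  have hSY : ∀ v ∈ nbhd T Y, q ∈ (geo hT v p).support := by
    intro v hv
    by_contra hvC
    obtain ⟨a, b, hab, -, -, haC, hbC, -, ham, -⟩ :=
      exists_crossing (fun z => q ∉ (geo hT z p).support) (geo hT v y) hvC
        (fun h => h hyp)
    obtain ⟨hE, -⟩ := crossing_edge hT hpq hab haC (not_not.mp hbC)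
    exact hXY ⟨p, hpX, cvY hv hyY (hE ▸ ham)⟩
  have key : ∀ j, p ∈ Z j ∨ q ∈ Z j := by
    intro j
    obtain ⟨mj, hmZ, hmX⟩ := hZX j
    obtain ⟨nj, hnZ, hnY⟩ := hZY j
    obtain ⟨a, b, hab, -, -, haC, hbC, -, ham, hbm⟩ :=
      exists_crossing (fun z => q ∉ (geo hT z p).support) (geo hT mj nj) (hSX mj hmX)
        (fun h => h (hSY nj hnY))
    obtain ⟨hE1, hE2⟩ := crossing_edge hT hpq hab haC (not_not.mp hbC)
    have hpZ : p ∈ nbhd T (Z j) := cvZ j hmZ hnZ (hE1 ▸ ham)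
    have hqZ : q ∈ nbhd T (Z j) := cvZ j hmZ hnZ (hE2 ▸ hbm)
    obtain ⟨bp, hbpZ, hbp⟩ := hpZ
    obtain ⟨bq, hbqZ, hbq⟩ := hqZ
    rcases hbp with rfl | hbp_adj
    · exact Or.inl hbpZ
    rcases hbq with rfl | hbq_adj
    · exact Or.inr hbqZ
    by_cases hbpC : q ∉ (geo hT bp p).support
    · by_cases hbqC : q ∉ (geo hT bq p).support
      · obtain ⟨hE, -⟩ := crossing_edge hT hpq hbq_adj hbqC (Walk.start_mem_support _)
        exact Or.inl (hE ▸ hbqZ)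
      · obtain ⟨ws, hws⟩ := exists_squareWalk (hZc j) hbpZ hbqZ
        obtain ⟨a', b', hab', -, -, haC', hbC', -, ham', hbm'⟩ :=
          exists_crossing (fun z => q ∉ (geo hT z p).support) ws hbpC hbqC
        have ha'Z : a' ∈ Z j := hws a' ham'
        have hb'Z : b' ∈ Z j := hws b' hbm'
        rcases hab'.2 with hadj | ⟨u, h1, h2⟩
        · obtain ⟨hE, -⟩ := crossing_edge hT hpq hadj haC' (not_not.mp hbC')
          exact Or.inl (hE ▸ ha'Z)
        · by_cases huC : q ∉ (geo hT u p).support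
          · obtain ⟨-, hE⟩ := crossing_edge hT hpq h2 huC (not_not.mp hbC')
            exact Or.inr (hE ▸ hb'Z)
          · obtain ⟨hE, -⟩ := crossing_edge hT hpq h1 haC' (not_not.mp huC)
            exact Or.inl (hE ▸ ha'Z)
    · obtain ⟨-, hE⟩ := crossing_edge hT hpq hbp_adj.symm hC1p (not_not.mp hbpC)
      exact Or.inr (hE ▸ hbpZ)
  rcases key 0 with h0 | h0 <;> rcases key 1 with h1 | h1 <;> rcases key 2 with h2 | h2
  · exact Set.disjoint_left.mp (hZd 0 1 (by decide)) h0 h1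
  · exact Set.disjoint_left.mp (hZd 0 1 (by decide)) h0 h1
  · exact Set.disjoint_left.mp (hZd 0 2 (by decide)) h0 h2
  · exact Set.disjoint_left.mp (hZd 1 2 (by decide)) h1 h2
  · exact Set.disjoint_left.mp (hZd 1 2 (by decide)) h1 h2
  · exact Set.disjoint_left.mp (hZd 0 2 (by decide)) h0 h2
  · exact Set.disjoint_left.mp (hZd 0 1 (by decide)) h0 h1
  · exact Set.disjoint_left.mp (hZd 0 1 (by decide)) h0 h1

lemma no_big [Fintype V] (hdeg : ∀ v, (T.neighborSet v).ncard ≤ 3) {n : ℕ}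
    (hn : 5 ≤ n) (g : Fin n → Set V) (hd : ∀ i j, i ≠ j → Disjoint (g i) (g j))
    (m : V) (hm : ∀ i, m ∈ nbhd T (g i)) : False := by
  classical
  choose x hx hxm using hm
  have hinj : Function.Injective x := by
    intro i j hij
    by_contra hne
    exact Set.disjoint_left.mp (hd i j hne) (hx i) (hij ▸ hx j)
  have hsub : Set.range x ⊆ insert m (T.neighborSet m) := by
    rintro _ ⟨i, rfl⟩
    rcases hxm i with h | h
    · rw [← h]; exact Set.mem_insert _ _
    · exact Set.mem_insert_of_mem _ h.symm
  have h1 : (Set.range x).ncard = n := by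
    rw [← Nat.card_coe_set_eq, Nat.card_range_of_injective hinj,
      Nat.card_eq_fintype_card, Fintype.card_fin]
  have h2 : (Set.range x).ncard ≤ (insert m (T.neighborSet m)).ncard :=
    Set.ncard_le_ncard hsub (Set.toFinite _)
  have h3 : (insert m (T.neighborSet m)).ncard ≤ (T.neighborSet m).ncard + 1 :=
    Set.ncard_insert_le _ _
  have := hdeg m
  omega

lemma induce_singleton_connected (G : SimpleGraph V) (a : V) :
    (G.induce {a}).Connected := by
  rw [SimpleGraph.connected_iff]
  refine ⟨?_, ⟨⟨a, rfl⟩⟩⟩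
  intro u v
  have huv : u = v := Subtype.ext ((Set.eq_of_mem_singleton u.2).trans
    (Set.eq_of_mem_singleton v.2).symm)
  rw [huv]

lemma exists_four (s : Set V) (hs : s.Finite) (h4 : 4 ≤ s.ncard) :
    ∃ w1 w2 w3 w4, w1 ∈ s ∧ w2 ∈ s ∧ w3 ∈ s ∧ w4 ∈ s ∧
      w1 ≠ w2 ∧ w1 ≠ w3 ∧ w1 ≠ w4 ∧ w2 ≠ w3 ∧ w2 ≠ w4 ∧ w3 ≠ w4 := by
  classical
  have hc : 4 ≤ hs.toFinset.card := by
    rwa [Set.ncard_eq_toFinset_card s hs] at h4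
  obtain ⟨w1, h1⟩ := Finset.card_pos.mp (show 0 < hs.toFinset.card by omega)
  have hc1 : 3 ≤ (hs.toFinset.erase w1).card := by
    rw [Finset.card_erase_of_mem h1]; omega
  obtain ⟨w2, h2⟩ := Finset.card_pos.mp (show 0 < (hs.toFinset.erase w1).card by omega)
  have hc2 : 2 ≤ ((hs.toFinset.erase w1).erase w2).card := by
    rw [Finset.card_erase_of_mem h2]; omega
  obtain ⟨w3, h3⟩ := Finset.card_pos.mp
    (show 0 < ((hs.toFinset.erase w1).erase w2).card by omega)
  have hc3 : 1 ≤ (((hs.toFinset.erase w1).erase w2).erase w3).card := by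
    rw [Finset.card_erase_of_mem h3]; omega
  obtain ⟨w4, h4'⟩ := Finset.card_pos.mp
    (show 0 < (((hs.toFinset.erase w1).erase w2).erase w3).card by omega)
  obtain ⟨hneq43, h4''⟩ := Finset.mem_erase.mp h4'
  obtain ⟨hneq42, h4'''⟩ := Finset.mem_erase.mp h4''
  obtain ⟨hneq41, h4m⟩ := Finset.mem_erase.mp h4'''
  obtain ⟨hneq32, h3'⟩ := Finset.mem_erase.mp h3
  obtain ⟨hneq31, h3m⟩ := Finset.mem_erase.mp h3'
  obtain ⟨hneq21, h2m⟩ := Finset.mem_erase.mp h2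
  refine ⟨w1, w2, w3, w4, ?_, ?_, ?_, ?_, ?_, ?_, ?_, ?_, ?_, ?_⟩ <;>
    first
      | exact hs.mem_toFinset.mp h1
      | exact hs.mem_toFinset.mp h2m
      | exact hs.mem_toFinset.mp h3m
      | exact hs.mem_toFinset.mp h4m
      | exact hneq21.symm
      | exact hneq31.symm
      | exact hneq41.symm
      | exact hneq32.symm
      | exact hneq42.symm
      | exact hneq43.symm

end TreeSqAux

open TreeSqAux

theorem square_of_tree_planar_iff {V : Type*} [Fintype V]
    (T : SimpleGraph V) (hT : T.IsTree) :
    T.square.IsPlanar ↔ ∀ v : V, (T.neighborSet v).ncard ≤ 3 := by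
  classical
  constructor
  · intro hplanar v
    by_contra hv
    push_neg at hv
    obtain ⟨w1, w2, w3, w4, hw1, hw2, hw3, hw4, h12, h13, h14, h23, h24, h34⟩ :=
      exists_four (T.neighborSet v) (Set.toFinite _) (by omega)
    apply hplanar.1
    have ha1 : T.Adj v w1 := hw1
    have ha2 : T.Adj v w2 := hw2
    have ha3 : T.Adj v w3 := hw3
    have ha4 : T.Adj v w4 := hw4
    set vec : Fin 5 → V := ![v, w1, w2, w3, w4] with hvec
    have hvals : ∀ i : Fin 5, vec i = v ∨ T.Adj v (vec i) := by
      intro i; fin_cases i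
      · exact Or.inl rfl
      · exact Or.inr ha1
      · exact Or.inr ha2
      · exact Or.inr ha3
      · exact Or.inr ha4
    have hinj : Function.Injective vec := by
      have hv1 : v ≠ w1 := ha1.ne
      have hv2 : v ≠ w2 := ha2.ne
      have hv3 : v ≠ w3 := ha3.ne
      have hv4 : v ≠ w4 := ha4.ne
      have e0 : vec 0 = v := rfl
      have e1 : vec 1 = w1 := rfl
      have e2 : vec 2 = w2 := rfl
      have e3 : vec 3 = w3 := rfl
      have e4 : vec 4 = w4 := rfl
      intro i j h
      fin_cases i <;> fin_cases j <;> simp_all [e0, e1, e2, e3, e4]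
    refine ⟨fun i => {vec i}, fun i => Set.singleton_nonempty _,
      fun i => induce_singleton_connected _ _, ?_, ?_⟩
    · intro i j hij
      refine Set.disjoint_singleton_left.mpr ?_
      simp only [Set.mem_singleton_iff]
      exact fun h => hij (hinj h)
    · intro i j hij
      refine ⟨vec i, rfl, vec j, rfl, ?_⟩
      have hne : vec i ≠ vec j := fun h => hij (hinj h)
      refine ⟨hne, ?_⟩
      rcases hvals i with hi | hi <;> rcases hvals j with hj | hj
      · exact absurd (hi.trans hj.symm) hne
      · rw [hi]; exact Or.inl hj
      · rw [hj]; exact Or.inl hi.symm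
      · exact Or.inr ⟨v, hi.symm, hj⟩
  · intro hdeg
    constructor
    · rintro ⟨f, hne, hconn, hdisj, hadj⟩
      have hpair : ∀ i j : Fin 5, (nbhd T (f i) ∩ nbhd T (f j)).Nonempty := by
        intro i j
        by_cases hij : i = j
        · subst hij
          obtain ⟨z, hz⟩ := nbhd_nonempty (hne i)
          exact ⟨z, hz, hz⟩
        · obtain ⟨a, ha, b, hb, hab⟩ := hadj i j hij
          exact nbhd_cross ha hb hab
      obtain ⟨m, hm⟩ := hellyList hT ((List.finRange 5).map fun i => nbhd T (f i))
        (by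
          intro S hS
          obtain ⟨i, -, rfl⟩ := List.mem_map.mp hS
          exact nbhd_cvx hT (hconn i))
        (by
          intro S hS S' hS'
          obtain ⟨i, -, rfl⟩ := List.mem_map.mp hS
          obtain ⟨j, -, rfl⟩ := List.mem_map.mp hS'
          exact hpair i j)
      exact no_big hdeg (le_refl 5) f (fun i j hij => hdisj hij) m
        (fun i => hm _ (List.mem_map.mpr ⟨i, List.mem_finRange i, rfl⟩))
    · rintro ⟨f, hne, hconn, hdisj, hadj⟩
      have hcross : ∀ i j : Fin 3,
          (nbhd T (f (Sum.inl i)) ∩ nbhd T (f (Sum.inr j))).Nonempty := by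
        intro i j
        obtain ⟨a, ha, b, hb, hab⟩ := hadj (Sum.inl i) (Sum.inr j) (by simp)
        exact nbhd_cross ha hb hab
      by_cases hall : ∀ w w' : Fin 3 ⊕ Fin 3, (nbhd T (f w) ∩ nbhd T (f w')).Nonempty
      · obtain ⟨m, hm⟩ := hellyList hT
          ((Finset.univ : Finset (Fin 3 ⊕ Fin 3)).toList.map fun w => nbhd T (f w))
          (by
            intro S hS
            obtain ⟨w, -, rfl⟩ := List.mem_map.mp hS
            exact nbhd_cvx hT (hconn w))
          (by
            intro S hS S' hS'
            obtain ⟨w, -, rfl⟩ := List.mem_map.mp hS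
            obtain ⟨w', -, rfl⟩ := List.mem_map.mp hS'
            exact hall w w')
        have hm' : ∀ w, m ∈ nbhd T (f w) := fun w =>
          hm _ (List.mem_map.mpr ⟨w, Finset.mem_toList.mpr (Finset.mem_univ w), rfl⟩)
        have einj : Function.Injective
            (![Sum.inl 0, Sum.inl 1, Sum.inl 2, Sum.inr 0, Sum.inr 1, Sum.inr 2] :
              Fin 6 → Fin 3 ⊕ Fin 3) := by decide
        exact no_big hdeg (by norm_num)
          (fun k => f (![Sum.inl 0, Sum.inl 1, Sum.inl 2,
            Sum.inr 0, Sum.inr 1, Sum.inr 2] k))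
          (fun i j hij => hdisj (fun h => hij (einj h))) m (fun k => hm' _)
      · push_neg at hall
        obtain ⟨w, w', hww'⟩ := hall
        match w, w' with
        | Sum.inl i, Sum.inl j =>
          exact sep_contra hT (hconn (Sum.inl i)) (hconn (Sum.inl j))
            (fun k => hconn (Sum.inr k)) (by rw [hww']; exact Set.not_nonempty_empty)
            (fun a b hab => hdisj (fun h => hab (Sum.inr.inj h)))
            (fun k => let ⟨z, h1, h2⟩ := hcross i k; ⟨z, h2, h1⟩)
            (fun k => let ⟨z, h1, h2⟩ := hcross j k; ⟨z, h2, h1⟩)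
        | Sum.inr i, Sum.inr j =>
          exact sep_contra hT (hconn (Sum.inr i)) (hconn (Sum.inr j))
            (fun k => hconn (Sum.inl k)) (by rw [hww']; exact Set.not_nonempty_empty)
            (fun a b hab => hdisj (fun h => hab (Sum.inl.inj h)))
            (fun k => hcross k i) (fun k => hcross k j)
        | Sum.inl i, Sum.inr j => exact Set.not_nonempty_empty (hww' ▸ hcross i j)
        | Sum.inr i, Sum.inl j =>
          exact Set.not_nonempty_empty
            (hww' ▸ (let ⟨z, h1, h2⟩ := hcross j i; (⟨z, h2, h1⟩ :
              (nbhd T (f (Sum.inr i)) ∩ nbhd T (f (Sum.inl j))).Nonempty)))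
end
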